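/- For a symmetric positive-definite correlation matrix R and each fixed j with 2 ≤ j ≤ n, the ratios of bordered determinants are nonincreasing: 1 ≥ det(R_2^{*j}) ≥ det(R_3^{*j})/det(R_2) ≥ ... ≥ det(R_{j-1}^{*j})/det(R_{j-2}) ≥ det(R_j)/det(R_{j-1}) > 0. -/

import Mathlib

open Matrix

/-- Leading `i × i` principal submatrix. -/
def lead {n : ℕ} (R : Matrix (Fin n) (Fin n) ℝ) (i : ℕ) (h : i ≤ n) :
    Matrix (Fin i) (Fin i) ℝ :=
  R.submatrix (Fin.castLE h) (Fin.castLE h)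

/-- First `i` entries of column `j` of `R`. -/
def colv {n : ℕ} (R : Matrix (Fin n) (Fin n) ℝ) (i : ℕ) (h : i ≤ n) (j : Fin n) :
    Fin i → ℝ :=
  fun k => R (Fin.castLE h k) j


/-- The bordered matrix `R_{i+1}^{*j}` (0-indexed size parameter `i`):
`[[R_i, (ρ_{i+1}^{*j})ᵀ], [ρ_{i+1}^{*j}, 1]]`, i.e. the leading `i × i`
submatrix bordered by the first `i` entries of column `j` with corner `1`. -/
def brd {n : ℕ} (R : Matrix (Fin n) (Fin n) ℝ) (i : ℕ) (h : i ≤ n) (j : Fin n) :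
    Matrix (Fin (i + 1)) (Fin (i + 1)) ℝ :=
  Matrix.of fun k l =>
    if hk : (k : ℕ) < i then
      if hl : (l : ℕ) < i then R ⟨k, lt_of_lt_of_le hk h⟩ ⟨l, lt_of_lt_of_le hl h⟩
      else R ⟨k, lt_of_lt_of_le hk h⟩ j
    else if hl : (l : ℕ) < i then R ⟨l, lt_of_lt_of_le hl h⟩ j
    else 1

/-- PosDef is preserved by principal submatrices along injective maps. -/
lemma posDef_submatrix_inj {m n : ℕ} {M : Matrix (Fin n) (Fin n) ℝ} (hM : M.PosDef)
    (e : Fin m → Fin n) (he : Function.Injective e) : (M.submatrix e e).PosDef := by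
  refine Matrix.PosDef.of_dotProduct_mulVec_pos (hM.isHermitian.submatrix e) ?_
  intro x hx
  set y : Fin n → ℝ := fun i => ∑ k, if e k = i then x k else 0 with hy
  have hyek : ∀ k, y (e k) = x k := by
    intro k
    simp only [hy, he.eq_iff]
    simp [Finset.sum_ite_eq']
  have hyne : y ≠ 0 := by
    obtain ⟨k, hk⟩ := Function.ne_iff.mp hx
    intro h0
    exact hk (by rw [← hyek k, h0]; rfl)
  have hMy : ∀ i, (M *ᵥ y) i = ∑ l, M i (e l) * x l := by
    intro i
    simp only [mulVec, dotProduct, hy, Finset.mul_sum]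
    rw [Finset.sum_comm]
    congr 1; ext l
    simp [mul_ite, Finset.sum_ite_eq']
  have key : star x ⬝ᵥ (M.submatrix e e) *ᵥ x = star y ⬝ᵥ M *ᵥ y := by
    simp only [dotProduct, star, mulVec, submatrix_apply]
    calc ∑ k, x k * ∑ l, M (e k) (e l) * x l
        = ∑ i, ∑ k, (if e k = i then x k else 0) * (∑ l, M i (e l) * x l) := by
          rw [Finset.sum_comm]
          congr 1; ext k
          simp [ite_mul, Finset.sum_ite_eq']
      _ = ∑ i, y i * (M *ᵥ y) i := by
          congr 1; ext i
          rw [hMy i, hy, Finset.sum_mul]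
  rw [key]
  exact hM.dotProduct_mulVec_pos hyne

lemma lead_posDef {n : ℕ} {R : Matrix (Fin n) (Fin n) ℝ} (hR : R.PosDef) (i : ℕ) (h : i ≤ n) :
    (lead R i h).PosDef :=
  posDef_submatrix_inj hR _ (Fin.castLE_injective h)

/-- The embedding realising `brd` as a principal submatrix of `R`. -/
def bembed {n : ℕ} (a : ℕ) (j : Fin n) (ha : a ≤ (j : ℕ)) : Fin (a + 1) → Fin n :=
  fun k => if hk : (k : ℕ) < a then ⟨k, lt_of_lt_of_le hk (ha.trans j.isLt.le)⟩ else j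

lemma bembed_inj {n : ℕ} (a : ℕ) (j : Fin n) (ha : a ≤ (j : ℕ)) :
    Function.Injective (bembed a j ha) := by
  intro k l hkl
  unfold bembed at hkl
  by_cases hk : (k : ℕ) < a <;> by_cases hl : (l : ℕ) < a <;>
    simp [hk, hl] at hkl
  · exact Fin.ext hkl
  · exact absurd (congrArg Fin.val hkl) (by simp; omega)
  · exact absurd (congrArg Fin.val hkl) (by simp; omega)
  · have hk' : (k : ℕ) = a := by omega
    have hl' : (l : ℕ) = a := by omega
    exact Fin.ext (hk'.trans hl'.symm)

lemma brd_eq_submatrix {n : ℕ} {R : Matrix (Fin n) (Fin n) ℝ} (hR : R.PosDef)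
    (hdiag : ∀ k, R k k = 1) (a : ℕ) (j : Fin n) (ha : a ≤ (j : ℕ)) (h : a ≤ n) :
    brd R a h j = R.submatrix (bembed a j ha) (bembed a j ha) := by
  ext k l
  have hsym : ∀ i i', R i i' = R i' i := by
    intro i i'
    have := hR.isHermitian
    rw [IsHermitian, conjTranspose_eq_transpose_of_trivial] at this
    exact (congrFun (congrFun this i) i').symm
  simp only [brd, bembed, of_apply, submatrix_apply]
  by_cases hk : (k : ℕ) < a <;> by_cases hl : (l : ℕ) < a <;> simp [hk, hl]
  · exact hsym _ _
  · exact (hdiag j).symm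

lemma brd_posDef {n : ℕ} {R : Matrix (Fin n) (Fin n) ℝ} (hR : R.PosDef)
    (hdiag : ∀ k, R k k = 1) (a : ℕ) (j : Fin n) (ha : a ≤ (j : ℕ)) (h : a ≤ n) :
    (brd R a h j).PosDef := by
  rw [brd_eq_submatrix hR hdiag a j ha h]
  exact posDef_submatrix_inj hR _ (bembed_inj a j ha)

/-- Schur complement formula for the bordered determinant. -/
lemma brd_det {n : ℕ} {R : Matrix (Fin n) (Fin n) ℝ} (a : ℕ) (j : Fin n) (h : a ≤ n)
    (hA : (lead R a h).PosDef) :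
    (brd R a h j).det =
      (lead R a h).det * (1 - colv R a h j ⬝ᵥ (lead R a h)⁻¹ *ᵥ colv R a h j) := by
  set A := lead R a h with hAdef
  set ρ := colv R a h j with hρdef
  haveI : Invertible A := hA.isUnit.invertible
  have hblk : (brd R a h j).submatrix (finSumFinEquiv (m := a) (n := 1))
      (finSumFinEquiv (m := a) (n := 1)) =
      fromBlocks A (Matrix.of fun (k : Fin a) (_ : Fin 1) => ρ k)
        (Matrix.of fun (_ : Fin 1) (k : Fin a) => ρ k) (Matrix.of fun _ _ => (1 : ℝ)) := by
    ext k l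
    cases k with
    | inl k =>
      cases l with
      | inl l =>
        simp [brd, lead, colv, fromBlocks, finSumFinEquiv, Fin.castAdd, Fin.castLE, k.isLt, l.isLt]
        rfl
      | inr l =>
        have : ¬ ((finSumFinEquiv (Sum.inr l) : Fin (a + 1)) : ℕ) < a := by
          simp [finSumFinEquiv, Fin.natAdd]
        simp [brd, lead, colv, fromBlocks, finSumFinEquiv, Fin.castAdd, Fin.natAdd,
          Fin.castLE, k.isLt]
        rfl
    | inr k =>
      cases l with
      | inl l =>
        simp [brd, lead, colv, fromBlocks, finSumFinEquiv, Fin.castAdd, Fin.natAdd,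
          Fin.castLE, l.isLt]
        rfl
      | inr l =>
        simp [brd, fromBlocks, finSumFinEquiv, Fin.natAdd]
  have hdet : (brd R a h j).det = (fromBlocks A (Matrix.of fun (k : Fin a) (_ : Fin 1) => ρ k)
        (Matrix.of fun (_ : Fin 1) (k : Fin a) => ρ k) (Matrix.of fun _ _ => (1 : ℝ))).det := by
    rw [← hblk, det_submatrix_equiv_self]
  rw [hdet, det_fromBlocks₁₁]
  congr 1
  rw [det_fin_one]
  have hinv : (⅟A : Matrix (Fin a) (Fin a) ℝ) = A⁻¹ := invOf_eq_nonsing_inv A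
  have hent : ((Matrix.of fun (_ : Fin 1) (k : Fin a) => ρ k) * A⁻¹ *
      (Matrix.of fun (k : Fin a) (_ : Fin 1) => ρ k)) 0 0 = ρ ᵥ* A⁻¹ ⬝ᵥ ρ := by
    simp [mul_apply, vecMul, dotProduct]
  simp only [Matrix.sub_apply, of_apply, hinv]
  rw [hent, ← dotProduct_mulVec]

/-- The variational inequality: `1 - ρᵀA⁻¹ρ` is the minimum of the quadratic. -/
lemma quad_min {m : ℕ} {A : Matrix (Fin m) (Fin m) ℝ} (hA : A.PosDef) (ρ x : Fin m → ℝ) :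
    1 - ρ ⬝ᵥ A⁻¹ *ᵥ ρ ≤ x ⬝ᵥ A *ᵥ x - 2 * (x ⬝ᵥ ρ) + 1 := by
  set w : Fin m → ℝ := A⁻¹ *ᵥ ρ with hw
  have hAw : A *ᵥ w = ρ := by
    rw [hw, mulVec_mulVec, mul_nonsing_inv _ (isUnit_iff_ne_zero.mpr hA.det_pos.ne'), one_mulVec]
  have hAt : Aᵀ = A := by
    have := hA.isHermitian
    rwa [IsHermitian, conjTranspose_eq_transpose_of_trivial] at this
  have hpos : 0 ≤ (x - w) ⬝ᵥ A *ᵥ (x - w) := by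
    have := hA.posSemidef.dotProduct_mulVec_nonneg (x - w)
    simpa using this
  have hexp : (x - w) ⬝ᵥ A *ᵥ (x - w) =
      x ⬝ᵥ A *ᵥ x - 2 * (x ⬝ᵥ ρ) + ρ ⬝ᵥ A⁻¹ *ᵥ ρ := by
    have h1 : w ⬝ᵥ A *ᵥ x = ρ ⬝ᵥ x := by
      rw [dotProduct_mulVec, ← mulVec_transpose, hAt, hAw]
    have h2 : w ⬝ᵥ ρ = ρ ⬝ᵥ A⁻¹ *ᵥ ρ := by
      rw [dotProduct_comm, hw]
    rw [mulVec_sub, dotProduct_sub, sub_dotProduct, sub_dotProduct, hAw]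
    rw [h1, h2, dotProduct_comm ρ x]
    ring
  linarith [hpos, hexp ▸ hpos]

lemma ratio_eq {n : ℕ} {R : Matrix (Fin n) (Fin n) ℝ} (hR : R.PosDef) (a : ℕ) (j : Fin n)
    (h : a ≤ n) :
    (brd R a h j).det / (lead R a h).det =
      1 - colv R a h j ⬝ᵥ (lead R a h)⁻¹ *ᵥ colv R a h j := by
  have hA := lead_posDef hR a h
  rw [brd_det a j h hA, mul_comm, mul_div_assoc, div_self hA.det_pos.ne', mul_one]

/-- One monotone step. -/
lemma ratio_step {n : ℕ} {R : Matrix (Fin n) (Fin n) ℝ} (hR : R.PosDef) (a : ℕ) (j : Fin n)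
    (h : a ≤ n) (h' : a + 1 ≤ n) :
    1 - colv R (a+1) h' j ⬝ᵥ (lead R (a+1) h')⁻¹ *ᵥ colv R (a+1) h' j ≤
      1 - colv R a h j ⬝ᵥ (lead R a h)⁻¹ *ᵥ colv R a h j := by
  set A := lead R a h with hAdef
  set ρ := colv R a h j with hρdef
  have hA := lead_posDef hR a h
  have hA' := lead_posDef hR (a+1) h'
  set w : Fin a → ℝ := A⁻¹ *ᵥ ρ with hw
  have hAw : A *ᵥ w = ρ := by
    rw [hw, mulVec_mulVec, mul_nonsing_inv _ (isUnit_iff_ne_zero.mpr hA.det_pos.ne'), one_mulVec]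
  have key := quad_min hA' (colv R (a+1) h' j) (Fin.snoc w 0)
  have e1 : Fin.snoc w (0:ℝ) ⬝ᵥ colv R (a+1) h' j = w ⬝ᵥ ρ := by
    simp only [dotProduct, Fin.sum_univ_castSucc, Fin.snoc_castSucc, Fin.snoc_last,
      zero_mul, add_zero]
    rfl
  have e2 : Fin.snoc w (0:ℝ) ⬝ᵥ lead R (a+1) h' *ᵥ Fin.snoc w (0:ℝ) = w ⬝ᵥ A *ᵥ w := by
    simp only [dotProduct, mulVec, Fin.sum_univ_castSucc, Fin.snoc_castSucc, Fin.snoc_last,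
      zero_mul, mul_zero, add_zero]
    rfl
  rw [e1, e2, hAw] at key
  have : w ⬝ᵥ ρ = ρ ⬝ᵥ A⁻¹ *ᵥ ρ := by rw [dotProduct_comm, hw]
  calc 1 - colv R (a+1) h' j ⬝ᵥ (lead R (a+1) h')⁻¹ *ᵥ colv R (a+1) h' j
      ≤ w ⬝ᵥ ρ - 2 * (w ⬝ᵥ ρ) + 1 := key
    _ = 1 - ρ ⬝ᵥ A⁻¹ *ᵥ ρ := by rw [this] at *; linarith [this]

lemma ratio_zero {n : ℕ} (R : Matrix (Fin n) (Fin n) ℝ) (j : Fin n) (h : 0 ≤ n) :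
    (brd R 0 h j).det / (lead R 0 h).det = 1 := by
  have h1 : (brd R 0 h j).det = 1 := by
    rw [det_fin_one]
    simp [brd]
  have h2 : (lead R 0 h).det = 1 := det_isEmpty
  rw [h1, h2]; norm_num

/-- The second determinant ordering (Eq. (7) of the paper): for fixed column `j`,
the ratios `det(R_{i}^{*j})/det(R_{i−1})` (here `brd R a ⋯ / lead R a ⋯` with
0-indexed `a = i − 1 ≤ jf`) are nonincreasing in `i`, start at `1`, and the last
one `det(R_j)/det(R_{j−1})` is positive. -/
theorem stmt7 {n : ℕ} (R : Matrix (Fin n) (Fin n) ℝ) (hR : R.PosDef)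
    (hdiag : ∀ k, R k k = 1) (jf : Fin n) (hj : 1 ≤ (jf : ℕ)) :
    (∀ (a b : ℕ) (hab : a ≤ b) (hb : b ≤ (jf : ℕ)),
        (brd R b (hb.trans jf.isLt.le) jf).det / (lead R b (hb.trans jf.isLt.le)).det ≤
          (brd R a ((hab.trans hb).trans jf.isLt.le) jf).det /
            (lead R a ((hab.trans hb).trans jf.isLt.le)).det) ∧
    (∀ (a : ℕ) (ha : a ≤ (jf : ℕ)),
        (brd R a (ha.trans jf.isLt.le) jf).det / (lead R a (ha.trans jf.isLt.le)).det ≤ 1) ∧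
    (0 < (brd R (jf : ℕ) jf.isLt.le jf).det / (lead R (jf : ℕ) jf.isLt.le).det) := by
  have hmono : ∀ b (hb : b ≤ (jf : ℕ)) a (hab : a ≤ b),
      (brd R b (hb.trans jf.isLt.le) jf).det / (lead R b (hb.trans jf.isLt.le)).det ≤
        (brd R a ((hab.trans hb).trans jf.isLt.le) jf).det /
          (lead R a ((hab.trans hb).trans jf.isLt.le)).det := by
    intro b
    induction b with
    | zero =>
      intro hb a hab
      interval_cases a
      exact le_rfl
    | succ c ih =>
      intro hb a hab
      rcases Nat.eq_or_lt_of_le hab with rfl | hlt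
      · exact le_rfl
      · have hac : a ≤ c := Nat.lt_succ_iff.mp hlt
        have hc : c ≤ (jf : ℕ) := le_trans (Nat.le_succ c) hb
        have step : (brd R (c+1) (hb.trans jf.isLt.le) jf).det /
              (lead R (c+1) (hb.trans jf.isLt.le)).det ≤
            (brd R c (hc.trans jf.isLt.le) jf).det / (lead R c (hc.trans jf.isLt.le)).det := by
          rw [ratio_eq hR, ratio_eq hR]
          exact ratio_step hR c jf (hc.trans jf.isLt.le) (hb.trans jf.isLt.le)
        exact le_trans step (ih hc a hac)
  refine ⟨fun a b hab hb => hmono b hb a hab, ?_, ?_⟩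
  · intro a ha
    have := hmono a ha 0 (Nat.zero_le a)
    rwa [ratio_zero R jf] at this
  · apply div_pos
    · exact (brd_posDef hR hdiag (jf : ℕ) jf le_rfl jf.isLt.le).det_pos
    · exact (lead_posDef hR (jf : ℕ) jf.isLt.le).det_pos
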